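/- arXiv:1201.1209 — 5 statements merged into one kernel-verified Lean document; each statement's English description precedes it below -/
import Mathlib

section
/- There exist constants C > 0 and a > 0 such that for all 0 < t ≤ 1, all x, y ∈ ℝ^d and all 1 ≤ j ≤ d, the partial derivative of k_t^0 with respect to y_j satisfies |∂k_t^0/∂y_j (x,y)| ≤ C t^{−(d+1)/2} e^{−(a/t)|x−y|²}. -/
open Real

/-- The classical Hermite (Mehler) heat kernel on `ℝ^d`:
`k_t^0(x,y) = (2π sinh(2t))^{-d/2} exp(-(1/4)(tanh(t)|x+y|² + coth(t)|x-y|²))`,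
where `coth t = cosh t / sinh t`. -/
noncomputable def mehlerKernel (d : ℕ) (t : ℝ) (x y : EuclideanSpace ℝ (Fin d)) : ℝ :=
  (2 * Real.pi * Real.sinh (2 * t)) ^ (-(d : ℝ) / 2) *
    Real.exp (-(1 / 4) *
      (Real.tanh t * ‖x + y‖ ^ 2 + (Real.cosh t / Real.sinh t) * ‖x - y‖ ^ 2))


/-- The partial derivative `∂k_t^0/∂y_j (x,y)` of the Mehler kernel in the `j`-th
coordinate of the second variable. -/
noncomputable def mehlerPartialY (d : ℕ) (t : ℝ) (j : Fin d)
    (x y : EuclideanSpace ℝ (Fin d)) : ℝ :=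
  fderiv ℝ (fun z => mehlerKernel d t x z) y (EuclideanSpace.single j 1)

/- Auxiliary lemmas -/

lemma mehlerAux1 (u : ℝ) (_hu : 0 ≤ u) : u * Real.exp (-(u^2)/4) ≤ 1 := by
  have h : u ≤ Real.exp (u^2/4) := by
    nlinarith [Real.add_one_le_exp (u^2/4), sq_nonneg (u - 2)]
  calc u * Real.exp (-(u^2)/4) ≤ Real.exp (u^2/4) * Real.exp (-(u^2)/4) :=
        mul_le_mul_of_nonneg_right h (Real.exp_pos _).le
    _ = 1 := by rw [← Real.exp_add, show u^2/4 + -(u^2)/4 = 0 by ring, Real.exp_zero]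

lemma mehlerAux2 (u : ℝ) (_hu : 0 ≤ u) : u * Real.exp (-(u^2)/8) ≤ 2 := by
  have h : u ≤ 2 * Real.exp (u^2/8) := by
    nlinarith [Real.add_one_le_exp (u^2/8), sq_nonneg (u - 2)]
  calc u * Real.exp (-(u^2)/8) ≤ (2 * Real.exp (u^2/8)) * Real.exp (-(u^2)/8) :=
        mul_le_mul_of_nonneg_right h (Real.exp_pos _).le
    _ = 2 := by rw [mul_assoc, ← Real.exp_add, show u^2/8 + -(u^2)/8 = 0 by ring, Real.exp_zero,
        mul_one]

lemma mehlerAux3 (c u : ℝ) (hc : 0 ≤ c) (hu : 0 ≤ u) :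
    c * u * Real.exp (-(c * u^2)/4) ≤ Real.sqrt c := by
  have hsq := Real.sq_sqrt hc
  have h1 : c * u = Real.sqrt c * (Real.sqrt c * u) := by nlinarith
  have h2 : c * u^2 = (Real.sqrt c * u)^2 := by nlinarith
  rw [h1, h2, mul_assoc]
  calc Real.sqrt c * ((Real.sqrt c * u) * Real.exp (-((Real.sqrt c * u)^2)/4))
      ≤ Real.sqrt c * 1 :=
        mul_le_mul_of_nonneg_left (mehlerAux1 _ (mul_nonneg (Real.sqrt_nonneg c) hu))
          (Real.sqrt_nonneg c)
    _ = Real.sqrt c := mul_one _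

lemma mehlerAux4 (c u : ℝ) (hc : 0 ≤ c) (hu : 0 ≤ u) :
    c * u * Real.exp (-(c * u^2)/8) ≤ 2 * Real.sqrt c := by
  have hsq := Real.sq_sqrt hc
  have h1 : c * u = Real.sqrt c * (Real.sqrt c * u) := by nlinarith
  have h2 : c * u^2 = (Real.sqrt c * u)^2 := by nlinarith
  rw [h1, h2, mul_assoc, mul_comm (2:ℝ) (Real.sqrt c)]
  exact mul_le_mul_of_nonneg_left (mehlerAux2 _ (mul_nonneg (Real.sqrt_nonneg c) hu))
    (Real.sqrt_nonneg c)

lemma mehlerSinh_le_mul_cosh (t : ℝ) (ht : 0 ≤ t) : Real.sinh t ≤ t * Real.cosh t := by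
  have hd : ∀ s : ℝ, HasDerivAt (fun s => s * Real.cosh s - Real.sinh s) (s * Real.sinh s) s := by
    intro s
    have := ((hasDerivAt_id s).mul (Real.hasDerivAt_cosh s)).sub (Real.hasDerivAt_sinh s)
    convert this using 1
    any_goals rfl
    simp [id_eq]
    try ring
  have hmono : Monotone (fun s => s * Real.cosh s - Real.sinh s) := by
    apply monotone_of_deriv_nonneg
    · exact fun s => ((hd s).differentiableAt)
    · intro s
      rw [(hd s).deriv]
      rcases le_or_gt 0 s with h | h
      · have hs : 0 ≤ Real.sinh s := by simpa using Real.sinh_le_sinh.mpr h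
        exact mul_nonneg h hs
      · have hs : Real.sinh s ≤ 0 := by simpa using Real.sinh_le_sinh.mpr h.le
        nlinarith
  have h0 := hmono ht
  simp only [Real.sinh_zero, zero_mul, sub_zero, zero_sub] at h0
  linarith

lemma mehlerCoord_le_norm {d : ℕ} (v : EuclideanSpace ℝ (Fin d)) (j : Fin d) : |v j| ≤ ‖v‖ := by
  have h := abs_real_inner_le_norm v (EuclideanSpace.single j (1:ℝ))
  simpa [EuclideanSpace.inner_single_right, EuclideanSpace.norm_single] using h

/-- Explicit formula for the partial derivative of the Mehler kernel. -/
lemma mehlerPartialY_formula (d : ℕ) (t : ℝ) (j : Fin d) (x y : EuclideanSpace ℝ (Fin d)) :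
    mehlerPartialY d t j x y =
      mehlerKernel d t x y *
        (-(1/2) * (Real.tanh t * (x + y) j - (Real.cosh t / Real.sinh t) * (x - y) j)) := by
  have h1 : HasFDerivAt (fun z : EuclideanSpace ℝ (Fin d) => x + z)
      (ContinuousLinearMap.id ℝ (EuclideanSpace ℝ (Fin d))) y := by
    simpa using (hasFDerivAt_id y).const_add x
  have h2 : HasFDerivAt (fun z : EuclideanSpace ℝ (Fin d) => x - z)
      (-(ContinuousLinearMap.id ℝ (EuclideanSpace ℝ (Fin d)))) y := by
    simpa using (hasFDerivAt_id y).const_sub x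
  have hg : HasFDerivAt (fun z : EuclideanSpace ℝ (Fin d) => -(1/4) *
      (Real.tanh t * ‖x + z‖ ^ 2 + (Real.cosh t / Real.sinh t) * ‖x - z‖ ^ 2))
      ((-(1/4) : ℝ) • ((Real.tanh t •
          (2 • (innerSL ℝ (x + y)).comp (ContinuousLinearMap.id ℝ (EuclideanSpace ℝ (Fin d))))) +
        ((Real.cosh t / Real.sinh t) •
          (2 • (innerSL ℝ (x - y)).comp
            (-(ContinuousLinearMap.id ℝ (EuclideanSpace ℝ (Fin d)))))))) y :=
    ((h1.norm_sq.const_mul _).add (h2.norm_sq.const_mul _)).const_mul _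
  have H := (hg.exp.const_mul ((2 * Real.pi * Real.sinh (2 * t)) ^ (-(d : ℝ) / 2)))
  have hf : fderiv ℝ (fun z => mehlerKernel d t x z) y = _ := H.fderiv
  rw [mehlerPartialY, hf]
  simp only [ContinuousLinearMap.smul_apply, ContinuousLinearMap.add_apply,
    ContinuousLinearMap.comp_apply, ContinuousLinearMap.id_apply, ContinuousLinearMap.neg_apply,
    innerSL_apply_apply, smul_eq_mul, two_smul, ContinuousLinearMap.coe_smul', Pi.smul_apply]
  rw [mehlerKernel]
  simp only [EuclideanSpace.inner_single_right, RCLike.inner_apply, starRingEnd_apply,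
    real_inner_comm]
  simp [EuclideanSpace.inner_single_left, EuclideanSpace.inner_single_right]
  ring

/-- The abstract estimate used for the main theorem. -/
lemma mehlerAbstract_bound (d : ℕ) (t A B s r p q c : ℝ) (ht : 0 < t) (ht1 : t ≤ 1)
    (hA0 : 0 ≤ A) (hA1 : A ≤ 1) (hB0 : 0 ≤ B) (hBlow : 1/t ≤ B) (hBhigh : B ≤ 2/t)
    (hs0 : 0 ≤ s) (hr0 : 0 ≤ r) (hp : |p| ≤ s) (hq : |q| ≤ r)
    (hc0 : 0 < c) (hcle : c ≤ t ^ (-(d:ℝ)/2)) :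
    |c * Real.exp (-(1/4) * (A * s^2 + B * r^2)) * (-(1/2) * (A*p - B*q))|
      ≤ 2 * t ^ (-((d:ℝ)+1)/2) * Real.exp (-(1/8/t) * r^2) := by
  set Ex := Real.exp (-(1/4) * (A * s^2 + B * r^2)) with hExdef
  set D := Real.exp (-(1/8/t) * r^2) with hDdef
  have hEx0 : 0 < Ex := Real.exp_pos _
  have hD0 : 0 < D := Real.exp_pos _
  have hst : 0 < Real.sqrt t := Real.sqrt_pos.mpr ht
  have hst1 : Real.sqrt t ≤ 1 := by
    rw [show (1:ℝ) = Real.sqrt 1 by simp]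
    exact Real.sqrt_le_sqrt ht1
  have hsqB : 2 * Real.sqrt B ≤ 3 / Real.sqrt t := by
    have hBt : B * t ≤ 2 := (le_div_iff₀ ht).mp hBhigh
    rw [le_div_iff₀ hst, mul_assoc, ← Real.sqrt_mul hB0]
    have h1 : Real.sqrt (B * t) ≤ Real.sqrt 2 := Real.sqrt_le_sqrt hBt
    nlinarith [Real.sq_sqrt (by norm_num : (0:ℝ) ≤ 2), Real.sqrt_nonneg 2]
  have hpq : |A * p - B * q| ≤ A * s + B * r := by
    calc |A * p - B * q| ≤ |A * p| + |B * q| := abs_sub _ _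
      _ = A * |p| + B * |q| := by rw [abs_mul, abs_mul, abs_of_nonneg hA0, abs_of_nonneg hB0]
      _ ≤ A * s + B * r := by gcongr
  have hBr : (1:ℝ)/8/t * r^2 = (1/t * r^2)/8 := by ring
  have hB2 := mul_le_mul_of_nonneg_right hBlow (sq_nonneg r)
  have e1 : A * s * Ex ≤ D := by
    have hsplit : Ex = Real.exp (-(A * s^2)/4) * Real.exp (-(B * r^2)/4) := by
      rw [hExdef, ← Real.exp_add]; congr 1; ring
    calc A * s * Ex = (A * s * Real.exp (-(A * s^2)/4)) * Real.exp (-(B * r^2)/4) := by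
          rw [hsplit]; ring
      _ ≤ 1 * D := by
          apply mul_le_mul
          · exact le_trans (mehlerAux3 A s hA0 hs0) (Real.sqrt_le_one.mpr hA1)
          · exact Real.exp_le_exp.mpr (by nlinarith)
          · exact (Real.exp_pos _).le
          · norm_num
      _ = D := one_mul _
  have e2 : B * r * Ex ≤ (3 / Real.sqrt t) * D := by
    have hsplit : Ex = Real.exp (-(B * r^2)/8) *
        (Real.exp (-(A * s^2)/4) * Real.exp (-(B * r^2)/8)) := by
      rw [hExdef, ← Real.exp_add, ← Real.exp_add]; congr 1; ring
    calc B * r * Ex = (B * r * Real.exp (-(B * r^2)/8)) *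
          (Real.exp (-(A * s^2)/4) * Real.exp (-(B * r^2)/8)) := by rw [hsplit]; ring
      _ ≤ (2 * Real.sqrt B) * (1 * D) := by
          apply mul_le_mul (mehlerAux4 B r hB0 hr0)
          · apply mul_le_mul
            · exact Real.exp_le_one_iff.mpr (by nlinarith [mul_nonneg hA0 (sq_nonneg s)])
            · exact Real.exp_le_exp.mpr (by nlinarith)
            · exact (Real.exp_pos _).le
            · norm_num
          · positivity
          · positivity
      _ ≤ (3 / Real.sqrt t) * (1 * D) :=
          mul_le_mul_of_nonneg_right hsqB (by positivity)
      _ = (3 / Real.sqrt t) * D := by rw [one_mul]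
  have hrpow : t ^ (-((d:ℝ)+1)/2) = t ^ (-(d:ℝ)/2) / Real.sqrt t := by
    rw [Real.sqrt_eq_rpow, ← Real.rpow_sub ht]
    congr 1
    ring
  calc |c * Ex * (-(1/2) * (A*p - B*q))|
      = c * Ex * (1/2 * |A * p - B * q|) := by
        rw [abs_mul, abs_mul, abs_mul, abs_neg, abs_of_pos hc0, abs_of_pos hEx0,
          abs_of_pos (show (0:ℝ) < 1/2 by norm_num)]
    _ ≤ c * Ex * (1/2 * (A * s + B * r)) := by gcongr
    _ = (1/2) * (A * s * Ex + B * r * Ex) * c := by ring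
    _ ≤ (1/2) * (1 * D + (3 / Real.sqrt t) * D) * c := by
        rw [show (1:ℝ) * D = D by rw [one_mul]]
        gcongr
    _ ≤ (1/2) * ((1/Real.sqrt t) * D + (3 / Real.sqrt t) * D) * c := by
        have h1 : (1:ℝ) ≤ 1 / Real.sqrt t := one_le_one_div hst hst1
        gcongr
    _ = (2 / Real.sqrt t) * D * c := by ring
    _ ≤ (2 / Real.sqrt t) * D * t ^ (-(d:ℝ)/2) := by gcongr
    _ = 2 * t ^ (-((d:ℝ)+1)/2) * D := by rw [hrpow]; ring

/-- There exist `C > 0` and `a > 0` such that for all `0 < t ≤ 1`, all `x, y ∈ ℝ^d` and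
all `1 ≤ j ≤ d`, `|∂k_t^0/∂y_j (x,y)| ≤ C t^{-(d+1)/2} e^{-(a/t)|x-y|²}`. -/
theorem mehlerKernel_deriv_bound_small_time (d : ℕ) (hd : 1 ≤ d) :
    ∃ C > (0 : ℝ), ∃ a > (0 : ℝ), ∀ t : ℝ, 0 < t → t ≤ 1 →
      ∀ x y : EuclideanSpace ℝ (Fin d), ∀ j : Fin d,
        |mehlerPartialY d t j x y| ≤
          C * t ^ (-((d : ℝ) + 1) / 2) * Real.exp (-(a / t) * ‖x - y‖ ^ 2) := by
  refine ⟨2, by norm_num, 1/8, by norm_num, ?_⟩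
  intro t ht ht1 x y j
  have hsinh : 0 < Real.sinh t := by rwa [Real.sinh_pos_iff]
  have hcoshpos : 0 < Real.cosh t := Real.cosh_pos t
  have hA0 : 0 ≤ Real.tanh t := by rw [Real.tanh_eq_sinh_div_cosh]; positivity
  have hA1 : Real.tanh t ≤ 1 := by
    rw [Real.tanh_eq_sinh_div_cosh, div_le_one hcoshpos]
    nlinarith [Real.cosh_sub_sinh t, Real.exp_pos (-t)]
  have hB0 : 0 ≤ Real.cosh t / Real.sinh t := le_of_lt (div_pos hcoshpos hsinh)
  have hBlow : 1/t ≤ Real.cosh t / Real.sinh t := by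
    rw [div_le_div_iff₀ ht hsinh]
    nlinarith [mehlerSinh_le_mul_cosh t ht.le]
  have hcosh2 : Real.cosh t ≤ 2 := by
    rw [Real.cosh_eq]
    have h1 : Real.exp t ≤ Real.exp 1 := Real.exp_le_exp.mpr ht1
    have h2 : Real.exp (-t) ≤ Real.exp 0 := Real.exp_le_exp.mpr (by linarith)
    rw [Real.exp_zero] at h2
    nlinarith [Real.exp_one_lt_d9]
  have hBhigh : Real.cosh t / Real.sinh t ≤ 2/t := by
    rw [div_le_div_iff₀ hsinh ht]
    have hts : t ≤ Real.sinh t := (Real.self_lt_sinh_iff.mpr ht).le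
    nlinarith
  have hbase : 0 < 2 * Real.pi * Real.sinh (2 * t) := by
    have : 0 < Real.sinh (2*t) := Real.sinh_pos_iff.mpr (by linarith)
    positivity
  have hc0 : 0 < (2 * Real.pi * Real.sinh (2 * t)) ^ (-(d : ℝ) / 2) :=
    Real.rpow_pos_of_pos hbase _
  have hcle : (2 * Real.pi * Real.sinh (2 * t)) ^ (-(d : ℝ) / 2) ≤ t ^ (-(d : ℝ) / 2) := by
    apply Real.rpow_le_rpow_of_nonpos ht
    · have h2t : 2*t < Real.sinh (2*t) := Real.self_lt_sinh_iff.mpr (by linarith)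
      nlinarith [Real.pi_gt_three]
    · have : (0:ℝ) ≤ (d:ℝ) := Nat.cast_nonneg d
      rw [neg_div]
      have h2 : 0 ≤ (d:ℝ)/2 := by positivity
      linarith
  rw [mehlerPartialY_formula, mehlerKernel]
  exact mehlerAbstract_bound d t (Real.tanh t) (Real.cosh t / Real.sinh t) ‖x + y‖ ‖x - y‖
    ((x + y) j) ((x - y) j) _ ht ht1 hA0 hA1 hB0 hBlow hBhigh (norm_nonneg _) (norm_nonneg _)
    (mehlerCoord_le_norm _ j) (mehlerCoord_le_norm _ j) hc0 hcle
end

section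
/- There exist constants C > 0 and a > 0 such that for all 0 < t ≤ 1, all x, y ∈ ℝ^d and all 1 ≤ i, j ≤ d, |y_j · ∂k_t^0/∂y_i (x,y)| ≤ C t^{−d/2−1} e^{−(a/t)|x−y|²}. -/
open Real

lemma mehlerPartialY_eq (d : ℕ) (t : ℝ) (i : Fin d) (x y : EuclideanSpace ℝ (Fin d)) :
    mehlerPartialY d t i x y = mehlerKernel d t x y *
      (-(1/2) * (Real.tanh t * ((x + y) i) - (Real.cosh t / Real.sinh t) * ((x - y) i))) := by
  have h1 : HasFDerivAt (fun z : EuclideanSpace ℝ (Fin d) => ‖x + z‖ ^ 2)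
      (2 • (innerSL ℝ (x + y)).comp (ContinuousLinearMap.id ℝ _)) y :=
    ((hasFDerivAt_id y).const_add x).norm_sq
  have h2 : HasFDerivAt (fun z : EuclideanSpace ℝ (Fin d) => ‖x - z‖ ^ 2)
      (2 • (innerSL ℝ (x - y)).comp (-(ContinuousLinearMap.id ℝ _))) y :=
    ((hasFDerivAt_id y).const_sub x).norm_sq
  have h3 := ((((h1.const_mul (Real.tanh t)).add
      (h2.const_mul (Real.cosh t / Real.sinh t))).const_mul (-(1/4 : ℝ))).exp).const_mul
      ((2 * Real.pi * Real.sinh (2 * t)) ^ (-(d : ℝ) / 2))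
  rw [mehlerPartialY]
  simp only [mehlerKernel]
  have h3' := h3.fderiv
  simp only [Pi.add_apply] at h3'
  rw [h3']
  simp only [mehlerKernel, ContinuousLinearMap.coe_smul', Pi.smul_apply,
    ContinuousLinearMap.add_apply, ContinuousLinearMap.smul_apply,
    ContinuousLinearMap.comp_apply, ContinuousLinearMap.neg_apply,
    ContinuousLinearMap.id_apply, innerSL_apply_apply, smul_eq_mul,
    EuclideanSpace.inner_single_right, map_one, one_mul, inner_neg_right]
  simp only [starRingEnd_apply, star_trivial, nsmul_eq_mul, Nat.cast_ofNat]
  ring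

private lemma sinh_le_mul_cosh' {t : ℝ} (ht : 0 ≤ t) : Real.sinh t ≤ t * Real.cosh t := by
  have hmono : MonotoneOn (fun s : ℝ => s * Real.cosh s - Real.sinh s) (Set.Ici 0) := by
    have hder : ∀ s : ℝ, HasDerivAt (fun s : ℝ => s * Real.cosh s - Real.sinh s)
        (s * Real.sinh s) s := by
      intro s
      have h := ((hasDerivAt_id s).mul (Real.hasDerivAt_cosh s)).sub (Real.hasDerivAt_sinh s)
      refine h.congr_deriv ?_
      simp only [id_eq]
      ring
    apply monotoneOn_of_deriv_nonneg (convex_Ici 0)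
    · exact ((continuous_id.mul Real.continuous_cosh).sub Real.continuous_sinh).continuousOn
    · intro s _
      exact (hder s).differentiableAt.differentiableWithinAt
    · intro s hs
      rw [interior_Ici, Set.mem_Ioi] at hs
      rw [(hder s).deriv]
      exact mul_nonneg hs.le (Real.sinh_nonneg_iff.2 hs.le)
  have h0 : (0 : ℝ) ∈ Set.Ici (0 : ℝ) := Set.self_mem_Ici
  have := hmono h0 (Set.mem_Ici.2 ht) ht
  simpa using this

private lemma abs_coord_le_norm {d : ℕ} (y : EuclideanSpace ℝ (Fin d)) (j : Fin d) :
    |y j| ≤ ‖y‖ := by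
  rw [EuclideanSpace.norm_eq, ← Real.sqrt_sq_eq_abs]
  apply Real.sqrt_le_sqrt
  have := Finset.single_le_sum (f := fun i => ‖y i‖ ^ 2)
    (fun i _ => sq_nonneg _) (Finset.mem_univ j)
  simpa [sq_abs] using this

private lemma mul_exp_le_eight {r : ℝ} (hr : 0 ≤ r) : r * Real.exp (-(r/8)) ≤ 8 := by
  have h1 : r ≤ 8 * Real.exp (r/8) := by nlinarith [Real.add_one_le_exp (r/8)]
  calc r * Real.exp (-(r/8)) ≤ (8 * Real.exp (r/8)) * Real.exp (-(r/8)) :=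
        mul_le_mul_of_nonneg_right h1 (Real.exp_pos _).le
    _ = 8 := by rw [mul_assoc, ← Real.exp_add]; simp

private lemma cosh_le_two {t : ℝ} (ht : 0 < t) (ht1 : t ≤ 1) : Real.cosh t ≤ 2 := by
  have h1 : Real.cosh t ≤ Real.cosh 1 := by
    rw [Real.cosh_le_cosh]
    rw [abs_of_pos ht]
    simpa using ht1
  have h2 : Real.cosh 1 ≤ 2 := by
    rw [Real.cosh_eq]
    have he : Real.exp 1 < 2.7182818286 := Real.exp_one_lt_d9
    have he2 : Real.exp (-1 : ℝ) ≤ 1 := by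
      rw [Real.exp_le_one_iff]; norm_num
    nlinarith
  linarith

set_option maxHeartbeats 1000000

/-- There exist `C > 0` and `a > 0` such that for all `0 < t ≤ 1`, all `x, y ∈ ℝ^d` and
all `1 ≤ i, j ≤ d`, `|y_j ∂k_t^0/∂y_i (x,y)| ≤ C t^{-d/2-1} e^{-(a/t)|x-y|²}`. -/
theorem mehlerKernel_coord_deriv_bound_small_time (d : ℕ) (hd : 1 ≤ d) :
    ∃ C > (0 : ℝ), ∃ a > (0 : ℝ), ∀ t : ℝ, 0 < t → t ≤ 1 →
      ∀ x y : EuclideanSpace ℝ (Fin d), ∀ i j : Fin d,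
        |y j * mehlerPartialY d t i x y| ≤
          C * t ^ (-(d : ℝ) / 2 - 1) * Real.exp (-(a / t) * ‖x - y‖ ^ 2) := by
  refine ⟨8 * (4 * Real.pi) ^ (-(d : ℝ) / 2), by positivity, 1/8, by norm_num, ?_⟩
  intro t ht ht1 x y i j
  rw [mehlerPartialY_eq]
  have hst : 0 < Real.sinh t := Real.sinh_pos_iff.2 ht
  have hct : 0 < Real.cosh t := Real.cosh_pos t
  set τ := Real.tanh t with hτdef
  set κ := Real.cosh t / Real.sinh t with hκdef
  have hτpos : 0 < τ := by rw [hτdef, Real.tanh_eq_sinh_div_cosh]; positivity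
  have hκpos : 0 < κ := div_pos hct hst
  have hτκ : τ * κ = 1 := by
    rw [hτdef, hκdef, Real.tanh_eq_sinh_div_cosh]; field_simp
  have hsc : Real.sinh t ≤ Real.cosh t := by
    nlinarith [Real.cosh_sub_sinh t, Real.exp_pos (-t)]
  have hτκle : τ ≤ κ := by
    rw [hτdef, hκdef, Real.tanh_eq_sinh_div_cosh, div_le_div_iff₀ hct hst]
    nlinarith
  have hsinh_ge : t ≤ Real.sinh t := Real.self_le_sinh_iff.2 ht.le
  have hκ_ge : 1/t ≤ κ := by
    rw [hκdef, div_le_div_iff₀ ht hst]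
    nlinarith [sinh_le_mul_cosh' ht.le]
  have hκ_le : κ ≤ 2/t := by
    rw [hκdef, div_le_div_iff₀ hst ht]
    nlinarith [cosh_le_two ht ht1, hsinh_ge]
  set u := ‖x + y‖ with hu
  set v := ‖x - y‖ with hv
  have hu0 : 0 ≤ u := norm_nonneg _
  have hv0 : 0 ≤ v := norm_nonneg _
  set R := τ * u^2 + κ * v^2 with hR
  have hR0 : 0 ≤ R := by positivity
  set A := (2 * Real.pi * Real.sinh (2*t)) ^ (-(d:ℝ)/2) with hA
  have hs2 : 2*t ≤ Real.sinh (2*t) := Real.self_le_sinh_iff.2 (by linarith)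
  have hA0 : 0 < A := by
    rw [hA]; apply Real.rpow_pos_of_pos; nlinarith [Real.pi_pos]
  have hAle : A ≤ (4*Real.pi)^(-(d:ℝ)/2) * t ^ (-(d:ℝ)/2) := by
    rw [hA, ← Real.mul_rpow (by positivity) ht.le]
    apply Real.rpow_le_rpow_of_nonpos (by positivity)
    · nlinarith [Real.pi_pos]
    · have : (0:ℝ) ≤ (d:ℝ) := Nat.cast_nonneg d
      linarith
  set E := Real.exp (-(R/8)) with hEdef
  have hE0 : 0 < E := Real.exp_pos _
  have hker : mehlerKernel d t x y = A * (E * E) := by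
    have h0 : mehlerKernel d t x y = A * Real.exp (-(1/4) * R) := rfl
    rw [h0, hEdef, ← Real.exp_add]
    congr 1
    ring
  rw [hker]
  set P := τ * ((x+y) i) - κ * ((x-y) i) with hP
  have hxyi : |(x+y) i| ≤ u := abs_coord_le_norm (x+y) i
  have hxyi' : |(x-y) i| ≤ v := abs_coord_le_norm (x-y) i
  have hyj : |y j| ≤ (u+v)/2 := by
    have h1 : |y j| ≤ ‖y‖ := abs_coord_le_norm y j
    have h2 : (2:ℝ) * ‖y‖ ≤ u + v := by
      have heq : (2:ℝ) • y = (x+y) - (x-y) := by module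
      calc (2:ℝ)*‖y‖ = ‖(2:ℝ) • y‖ := by rw [norm_smul]; simp
        _ = ‖(x+y) - (x-y)‖ := by rw [heq]
        _ ≤ u + v := norm_sub_le _ _
    linarith
  have hPle : |P| ≤ τ * u + κ * v := by
    calc |P| ≤ |τ * ((x+y) i)| + |κ * ((x-y) i)| := abs_sub _ _
      _ = τ * |(x+y) i| + κ * |(x-y) i| := by
          rw [abs_mul, abs_mul, abs_of_pos hτpos, abs_of_pos hκpos]
      _ ≤ τ * u + κ * v := by gcongr
  clear_value τ κ u v R A E P
  set w := y j with hwdef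
  clear_value w
  clear hwdef hker hP hu hv hA hτdef hκdef hxyi hxyi'
  have h2uv : 2*(u*v) ≤ R := by
    have e1 : τ*(τ*u^2+κ*v^2) - τ*(2*(u*v)) = (τ*u - v)^2 + (τ*κ - 1)*v^2 := by ring
    have e2 : (0:ℝ) ≤ τ*(τ*u^2+κ*v^2) - τ*(2*(u*v)) := by
      rw [e1, hτκ]
      have := sq_nonneg (τ*u - v)
      nlinarith [sq_nonneg v]
    have e3 : τ*(2*(u*v)) ≤ τ*(τ*u^2+κ*v^2) := by linarith
    have e4 := le_of_mul_le_mul_left e3 hτpos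
    rw [hR]
    exact e4
  have hcross : (u+v)*(τ*u+κ*v) ≤ (1+κ)*R := by
    have c2 : (τ+κ)*(u*v) ≤ 2*κ*(u*v) := by
      apply mul_le_mul_of_nonneg_right ?_ (mul_nonneg hu0 hv0); linarith
    have c4 : κ*(2*(u*v)) ≤ κ*R := mul_le_mul_of_nonneg_left h2uv hκpos.le
    have c5 : (u+v)*(τ*u+κ*v) = (τ*u^2 + κ*v^2) + (τ+κ)*(u*v) := by ring
    have c6 : (1+κ)*R = R + κ*R := by ring
    rw [c5, c6, ← hR]
    linarith
  have hRE : R * E ≤ 8 := by rw [hEdef]; exact mul_exp_le_eight hR0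
  have hmain : (u+v)*(τ*u+κ*v)*E ≤ 24/t := by
    have h1 : (u+v)*(τ*u+κ*v)*E ≤ ((1+κ)*R)*E :=
      mul_le_mul_of_nonneg_right hcross hE0.le
    have h3 : (1+κ)*(R*E) ≤ (3/t)*8 := by
      apply mul_le_mul _ hRE (by positivity) (by positivity)
      have ht' : 1 ≤ 1/t := by rw [le_div_iff₀ ht]; linarith
      have h3t : (3:ℝ)/t = 1/t + 2/t := by ring
      linarith
    have h2 : ((1+κ)*R)*E = (1+κ)*(R*E) := by ring
    have h4 : (3:ℝ)/t*8 = 24/t := by ring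
    linarith
  have hEexp : E ≤ Real.exp (-(1/8/t)*v^2) := by
    rw [hEdef, Real.exp_le_exp]
    have hkv : (1/t)*v^2 ≤ κ*v^2 := mul_le_mul_of_nonneg_right hκ_ge (sq_nonneg v)
    have hτu : 0 ≤ τ*u^2 := by positivity
    rw [hR]
    have h8 : (1:ℝ)/8/t * v^2 = ((1/t)*v^2)/8 := by ring
    linarith
  calc |w * (A * (E * E) * (-(1/2) * P))|
      ≤ ((u+v)/2) * (A * (E*E) * ((1/2) * (τ*u+κ*v))) := by
        rw [abs_mul]
        have hX : |A * (E * E) * (-(1/2) * P)| = A * (E*E) * ((1/2) * |P|) := by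
          rw [abs_mul, abs_mul, abs_mul, abs_mul, abs_of_pos hA0, abs_of_pos hE0]
          norm_num
        rw [hX]
        gcongr
    _ = (A/4) * ((u+v)*(τ*u+κ*v)*E) * E := by ring
    _ ≤ (A/4) * (24/t) * Real.exp (-(1/8/t)*v^2) := by
        gcongr
    _ ≤ (8 * (4*Real.pi)^(-(d:ℝ)/2)) * t^(-(d:ℝ)/2 - 1) * Real.exp (-(1/8/t)*v^2) := by
        have hsplit : t^(-(d:ℝ)/2 - 1) = t^(-(d:ℝ)/2) / t := by
          rw [Real.rpow_sub ht, Real.rpow_one]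
        rw [hsplit]
        apply mul_le_mul_of_nonneg_right _ (Real.exp_pos _).le
        have heq2 : 8*(4*Real.pi)^(-(d:ℝ)/2)*((t^(-(d:ℝ)/2))/t)
            = (8*(4*Real.pi)^(-(d:ℝ)/2)*t^(-(d:ℝ)/2))/t := by ring
        have heq1 : A/4 * (24/t) = (6*A)/t := by ring
        rw [heq1, heq2]
        gcongr ?_ / t
        have hx : 0 ≤ (4*Real.pi)^(-(d:ℝ)/2) * t^(-(d:ℝ)/2) := by positivity
        linarith
end

section
/- There exist constants C > 0 and a > 0 such that for all t > 1, all x, y ∈ ℝ^d and all 1 ≤ j ≤ d, |y_j · k_t^0(x,y)| ≤ C e^{−dt} e^{−a|x−y|²}. -/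
open Real

/-- `u e^{-c u²} ≤ 1 + 1/c` for `u ≥ 0`, `c > 0`. -/
lemma mul_exp_neg_sq_le (c u : ℝ) (hc : 0 < c) (hu : 0 ≤ u) :
    u * Real.exp (-(c * u ^ 2)) ≤ 1 + 1 / c := by
  rcases le_or_gt u 1 with h | h
  · have h1 : Real.exp (-(c * u ^ 2)) ≤ 1 := by
      rw [Real.exp_le_one_iff]
      nlinarith
    have h2 : u * Real.exp (-(c * u ^ 2)) ≤ 1 * 1 :=
      mul_le_mul h h1 (Real.exp_pos _).le zero_le_one
    have : (0:ℝ) < 1 / c := by positivity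
    linarith
  · have h1 : u ≤ u ^ 2 := by nlinarith
    have h2 : c * u ^ 2 ≤ Real.exp (c * u ^ 2) := by
      linarith [Real.add_one_le_exp (c * u ^ 2)]
    have key : c * u ^ 2 * Real.exp (-(c * u ^ 2)) ≤ 1 := by
      have := mul_le_mul_of_nonneg_right h2 (Real.exp_pos (-(c * u ^ 2))).le
      rwa [← Real.exp_add, add_neg_cancel, Real.exp_zero] at this
    have h4 : u * Real.exp (-(c * u ^ 2)) ≤ u ^ 2 * Real.exp (-(c * u ^ 2)) := by
      have := (Real.exp_pos (-(c * u ^ 2))).le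
      nlinarith
    have h5 : u ^ 2 * Real.exp (-(c * u ^ 2)) ≤ 1 / c := by
      rw [le_div_iff₀ hc]
      nlinarith [key]
    linarith
/-- There exist `C > 0` and `a > 0` such that for all `t > 1`, all `x, y ∈ ℝ^d` and all
`1 ≤ j ≤ d`, `|y_j k_t^0(x,y)| ≤ C e^{-dt} e^{-a|x-y|²}`. -/
theorem mehlerKernel_coord_bound_large_time (d : ℕ) (hd : 1 ≤ d) :
    ∃ C > (0 : ℝ), ∃ a > (0 : ℝ), ∀ t : ℝ, 1 < t →
      ∀ x y : EuclideanSpace ℝ (Fin d), ∀ j : Fin d,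
        |y j * mehlerKernel d t x y| ≤
          C * Real.exp (-(d : ℝ) * t) * Real.exp (-a * ‖x - y‖ ^ 2) := by
  have hb0 : (0 : ℝ) < Real.tanh 1 := by
    rw [Real.tanh_eq_sinh_div_cosh]
    exact div_pos (Real.sinh_pos_iff.2 one_pos) (Real.cosh_pos 1)
  set b : ℝ := Real.tanh 1 / 4 with hbdef
  have hb : 0 < b := by positivity
  set c0 : ℝ := Real.pi * (1 - Real.exp (-4)) with hc0def
  have hc0 : 0 < c0 := by
    have : Real.exp (-4) < 1 := Real.exp_lt_one_iff.2 (by norm_num)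
    have := Real.pi_pos
    nlinarith
  set M : ℝ := (1 + 1 / b + 9) / 2 with hMdef
  have hM : 0 < M := by positivity
  refine ⟨c0 ^ (-(d : ℝ) / 2) * M, by positivity, 1 / 8, by norm_num, ?_⟩
  intro t ht x y j
  have hspos : (0 : ℝ) ≤ ‖x + y‖ := norm_nonneg _
  have hrpos : (0 : ℝ) ≤ ‖x - y‖ := norm_nonneg _
  set s : ℝ := ‖x + y‖
  set r : ℝ := ‖x - y‖
  have ht0 : (0 : ℝ) < t := by linarith
  -- kernel prefactor bound
  have hKle : (2 * Real.pi * Real.sinh (2 * t)) ^ (-(d : ℝ) / 2) ≤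
      c0 ^ (-(d : ℝ) / 2) * Real.exp (-(d : ℝ) * t) := by
    have h1 : c0 * Real.exp (2 * t) ≤ 2 * Real.pi * Real.sinh (2 * t) := by
      rw [Real.sinh_eq]
      have e1 : Real.exp (-(2 * t)) = Real.exp (2 * t) * Real.exp (-(4 * t)) := by
        rw [← Real.exp_add]; ring_nf
      have e2 : Real.exp (-(4 * t)) ≤ Real.exp (-4) := Real.exp_le_exp.2 (by linarith)
      have e3 : (0 : ℝ) < Real.exp (2 * t) := Real.exp_pos _
      have := Real.pi_pos
      rw [hc0def, e1]
      nlinarith [mul_le_mul_of_nonneg_left e2 (by positivity : (0:ℝ) ≤ Real.pi * Real.exp (2 * t))]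
    have h2 : (2 * Real.pi * Real.sinh (2 * t)) ^ (-(d : ℝ) / 2) ≤
        (c0 * Real.exp (2 * t)) ^ (-(d : ℝ) / 2) := by
      apply Real.rpow_le_rpow_of_nonpos (by positivity) h1
      have : (0:ℝ) ≤ (d : ℝ) := by positivity
      linarith [div_nonneg this (by norm_num : (0:ℝ) ≤ 2)]
    refine h2.trans_eq ?_
    rw [Real.mul_rpow hc0.le (Real.exp_pos _).le, ← Real.exp_mul]
    congr 1
    ring
  -- exponential factor bound
  have hEle : Real.exp (-(1 / 4) * (Real.tanh t * s ^ 2 + (Real.cosh t / Real.sinh t) * r ^ 2)) ≤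
      Real.exp (-(b * s ^ 2)) * Real.exp (-(r ^ 2 / 8)) * Real.exp (-(r ^ 2 / 8)) := by
    rw [← Real.exp_add, ← Real.exp_add, Real.exp_le_exp]
    have hsinht : 0 < Real.sinh t := Real.sinh_pos_iff.2 ht0
    have htanh : Real.tanh 1 ≤ Real.tanh t := by
      rw [Real.tanh_eq_sinh_div_cosh, Real.tanh_eq_sinh_div_cosh,
        div_le_div_iff₀ (Real.cosh_pos 1) (Real.cosh_pos t)]
      have := Real.sinh_sub t 1
      have hpos : 0 ≤ Real.sinh (t - 1) := by
        rw [Real.sinh_nonneg_iff]; linarith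
      linarith [this ▸ hpos]
    have hcoth : 1 ≤ Real.cosh t / Real.sinh t := by
      rw [le_div_iff₀ hsinht, one_mul]
      rw [Real.sinh_eq, Real.cosh_eq]
      have := (Real.exp_pos (-t)).le
      linarith
    have hs2 : 0 ≤ s ^ 2 := sq_nonneg _
    have hr2 : 0 ≤ r ^ 2 := sq_nonneg _
    have h4b : 4 * b = Real.tanh 1 := by rw [hbdef]; ring
    nlinarith [mul_le_mul_of_nonneg_right htanh hs2, mul_le_mul_of_nonneg_right hcoth hr2]
  -- coordinate bound
  have hyj : |y j| ≤ (s + r) / 2 := by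
    have h1 : |y j| ≤ ‖y‖ := by
      rw [EuclideanSpace.norm_eq, ← Real.sqrt_sq_eq_abs]
      apply Real.sqrt_le_sqrt
      have e : y j ^ 2 = ‖y j‖ ^ 2 := by rw [Real.norm_eq_abs, sq_abs]
      rw [e]
      exact Finset.single_le_sum (f := fun i => ‖y i‖ ^ 2) (fun i _ => by positivity)
        (Finset.mem_univ j)
    have h2 : 2 * ‖y‖ ≤ s + r := by
      have e : (x + y) - (x - y) = (2 : ℝ) • y := by
        ext i; simp; ring
      calc 2 * ‖y‖ = ‖(2:ℝ) • y‖ := by rw [norm_smul]; simp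
        _ = ‖(x + y) - (x - y)‖ := by rw [e]
        _ ≤ s + r := norm_sub_le _ _
    linarith
  -- combine
  have hK0 : (0:ℝ) < (2 * Real.pi * Real.sinh (2 * t)) ^ (-(d : ℝ) / 2) := by
    have : 0 < Real.sinh (2 * t) := Real.sinh_pos_iff.2 (by linarith)
    have := Real.pi_pos
    positivity
  have hE0 : (0:ℝ) < Real.exp (-(1 / 4) *
      (Real.tanh t * s ^ 2 + (Real.cosh t / Real.sinh t) * r ^ 2)) := Real.exp_pos _
  rw [abs_mul, show |mehlerKernel d t x y| = mehlerKernel d t x y from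
    abs_of_pos (mul_pos hK0 hE0)]
  unfold mehlerKernel
  have hstep1 : s * Real.exp (-(b * s ^ 2)) ≤ 1 + 1 / b := mul_exp_neg_sq_le b s hb hspos
  have hstep2 : r * Real.exp (-(r ^ 2 / 8)) ≤ 9 := by
    have := mul_exp_neg_sq_le (1/8) r (by norm_num) hrpos
    have e : (1:ℝ)/8 * r ^ 2 = r ^ 2 / 8 := by ring
    rw [e] at this
    linarith [this]
  have hexp1 : Real.exp (-(b * s ^ 2)) ≤ 1 := Real.exp_le_one_iff.2 (by nlinarith [sq_nonneg s])
  have hexp2 : Real.exp (-(r ^ 2 / 8)) ≤ 1 := Real.exp_le_one_iff.2 (by nlinarith [sq_nonneg r])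
  calc |y j| * ((2 * Real.pi * Real.sinh (2 * t)) ^ (-(d : ℝ) / 2) *
        Real.exp (-(1 / 4) * (Real.tanh t * s ^ 2 + (Real.cosh t / Real.sinh t) * r ^ 2)))
      ≤ ((s + r) / 2) * ((c0 ^ (-(d : ℝ) / 2) * Real.exp (-(d : ℝ) * t)) *
        (Real.exp (-(b * s ^ 2)) * Real.exp (-(r ^ 2 / 8)) * Real.exp (-(r ^ 2 / 8)))) := by
        apply mul_le_mul hyj (mul_le_mul hKle hEle hE0.le (by positivity))
          (by positivity) (by linarith)
    _ = (c0 ^ (-(d : ℝ) / 2) * Real.exp (-(d : ℝ) * t)) *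
        ((s * Real.exp (-(b * s ^ 2)) * Real.exp (-(r ^ 2 / 8)) +
          r * Real.exp (-(r ^ 2 / 8)) * Real.exp (-(b * s ^ 2))) / 2) *
        Real.exp (-(r ^ 2 / 8)) := by ring
    _ ≤ (c0 ^ (-(d : ℝ) / 2) * Real.exp (-(d : ℝ) * t)) * M * Real.exp (-(r ^ 2 / 8)) := by
        apply mul_le_mul_of_nonneg_right _ (Real.exp_pos _).le
        apply mul_le_mul_of_nonneg_left _ (by positivity)
        rw [hMdef]
        have t1 : s * Real.exp (-(b * s ^ 2)) * Real.exp (-(r ^ 2 / 8)) ≤ 1 + 1 / b := by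
          calc s * Real.exp (-(b * s ^ 2)) * Real.exp (-(r ^ 2 / 8)) ≤
              s * Real.exp (-(b * s ^ 2)) * 1 := by
                apply mul_le_mul_of_nonneg_left hexp2 (by positivity)
            _ = s * Real.exp (-(b * s ^ 2)) := by ring
            _ ≤ 1 + 1 / b := hstep1
        have t2 : r * Real.exp (-(r ^ 2 / 8)) * Real.exp (-(b * s ^ 2)) ≤ 9 := by
          calc r * Real.exp (-(r ^ 2 / 8)) * Real.exp (-(b * s ^ 2)) ≤
              r * Real.exp (-(r ^ 2 / 8)) * 1 := by
                apply mul_le_mul_of_nonneg_left hexp1 (by positivity)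
            _ = r * Real.exp (-(r ^ 2 / 8)) := by ring
            _ ≤ 9 := hstep2
        linarith
    _ = c0 ^ (-(d : ℝ) / 2) * M * Real.exp (-(d : ℝ) * t) *
        Real.exp (-(1/8 : ℝ) * r ^ 2) := by rw [show -(r^2/8) = -(1/8:ℝ) * r^2 by ring]; ring
end

section
/- For every b > 0 there exists a constant C > 0 such that for all t > 0 and all real numbers u, v with uv ≥ 0 and v ≠ 0, one has |1 − e^{−2buv/t}| / |v| ≤ C (t^{−1/2} + t^{−1}|u − v|). -/
/-- For every `b > 0` there exists `C > 0` such that for all `t > 0` and all real `u, v`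
with `uv ≥ 0` and `v ≠ 0`, `|1 - e^{-2buv/t}|/|v| ≤ C (t^{-1/2} + t^{-1}|u - v|)`. -/
theorem phi_t_bound (b : ℝ) (hb : 0 < b) :
    ∃ C > (0 : ℝ), ∀ t : ℝ, 0 < t → ∀ u v : ℝ, 0 ≤ u * v → v ≠ 0 →
      |1 - Real.exp (-(2 * b * u * v) / t)| / |v| ≤
        C * (t ^ (-(1 : ℝ) / 2) + t⁻¹ * |u - v|) := by
  refine ⟨2 * b + 1, by linarith, ?_⟩
  intro t ht u v huv hv
  have hvpos : 0 < |v| := abs_pos.mpr hv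
  have hst : 0 < Real.sqrt t := Real.sqrt_pos.mpr ht
  have hts : Real.sqrt t * Real.sqrt t = t := Real.mul_self_sqrt ht.le
  have hrpow : t ^ (-(1 : ℝ) / 2) = (Real.sqrt t)⁻¹ := by
    rw [Real.sqrt_eq_rpow, ← Real.rpow_neg ht.le]
    norm_num
  set E : ℝ := Real.exp (-(2 * b * u * v) / t) with hE
  have hEnn : 0 ≤ 1 - E := by
    have : E ≤ 1 := by
      rw [hE, Real.exp_le_one_iff, neg_div]
      have : 0 ≤ 2 * b * u * v / t := div_nonneg (by nlinarith) ht.le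
      linarith
    linarith
  have habs : |1 - E| = 1 - E := abs_of_nonneg hEnn
  have h1 : 1 - E ≤ 2 * b * u * v / t := by
    have := Real.add_one_le_exp (-(2 * b * u * v / t))
    rw [hE, neg_div]
    linarith
  have h2 : 1 - E ≤ 1 := by
    have := Real.exp_pos (-(2 * b * u * v) / t)
    rw [hE]; linarith
  have huvabs : u * v ≤ |u| * |v| := (le_abs_self _).trans (abs_mul u v).le
  have huub : |u| ≤ |v| + |u - v| := by
    have := abs_sub_abs_le_abs_sub u v
    linarith
  have hnn1 : 0 ≤ (Real.sqrt t)⁻¹ := by positivity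
  have hnn2 : 0 ≤ t⁻¹ * |u - v| := by positivity
  rw [habs, hrpow]
  rcases le_or_gt |v| (Real.sqrt t) with hc | hc
  · -- small |v| case
    have s1 : (1 - E) / |v| ≤ 2 * b * |u| / t := by
      rw [div_le_div_iff₀ hvpos ht]
      have hle : 2 * b * (u * v) ≤ 2 * b * (|u| * |v|) := by nlinarith
      nlinarith [mul_le_mul_of_nonneg_right h1 hvpos.le,
        div_mul_cancel₀ (2 * b * u * v) (ne_of_gt ht)]
    have s2 : 2 * b * |u| / t ≤ 2 * b * (Real.sqrt t + |u - v|) / t := by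
      gcongr
      linarith
    have s3 : 2 * b * (Real.sqrt t + |u - v|) / t
        = 2 * b * ((Real.sqrt t)⁻¹ + t⁻¹ * |u - v|) := by
      rw [← hts]
      field_simp
      rw [Real.sqrt_sq hst.le]; ring
    calc (1 - E) / |v| ≤ 2 * b * |u| / t := s1
      _ ≤ 2 * b * (Real.sqrt t + |u - v|) / t := s2
      _ = 2 * b * ((Real.sqrt t)⁻¹ + t⁻¹ * |u - v|) := s3
      _ ≤ (2 * b + 1) * ((Real.sqrt t)⁻¹ + t⁻¹ * |u - v|) := by nlinarith
  · -- large |v| case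
    have s1 : (1 - E) / |v| ≤ (Real.sqrt t)⁻¹ := by
      calc (1 - E) / |v| ≤ 1 / |v| := by gcongr
        _ ≤ 1 / Real.sqrt t := one_div_le_one_div_of_le hst hc.le
        _ = (Real.sqrt t)⁻¹ := one_div _
    calc (1 - E) / |v| ≤ (Real.sqrt t)⁻¹ := s1
      _ ≤ (2 * b + 1) * ((Real.sqrt t)⁻¹ + t⁻¹ * |u - v|) := by nlinarith
end

section
/- Let α ∈ ℝ^d with ⟨α,α⟩ = 2 and let σ_α(y) = y − ⟨y,α⟩α be the reflection in the hyperplane orthogonal to α. For every b > 0 there exists a constant C > 0 such that for all t > 0 and all y, η ∈ ℝ^d with ⟨y,α⟩ ≠ 0, | e^{−(b/t)|y−η|²} − e^{−(b/t)|σ_α(y)−η|²} | / |⟨y,α⟩| ≤ C t^{−1/2} ( e^{−(b/(2t))|y−η|²} + e^{−(b/(2t))|σ_α(y)−η|²} ). -/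
lemma quarter_sq_bound (x X : ℝ) (h : x^2/4 + 1 ≤ X) : x ≤ X := by
  nlinarith [sq_nonneg (x - 2)]

lemma oneD (c u v : ℝ) (hc : 0 < c) (h : u^2 ≤ v^2) :
    Real.exp (-(c*u^2)/2) - Real.exp (-(c*v^2)/2) ≤
      2 * Real.sqrt c * |u - v| * (Real.exp (-(c*u^2)/4) + Real.exp (-(c*v^2)/4)) := by
  set s := Real.sqrt c with hs
  have hs0 : 0 < s := Real.sqrt_pos.mpr hc
  have hcs : s^2 = c := Real.sq_sqrt hc.le
  set E := Real.exp (-(c*u^2)/4) with hE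
  set F := Real.exp (-(c*v^2)/4) with hF
  set D := |u - v| with hD
  set a := |u| with ha
  set w := |v| with hw
  have hD0 : 0 ≤ D := abs_nonneg _
  have ha0 : 0 ≤ a := abs_nonneg _
  have hw0 : 0 ≤ w := abs_nonneg _
  have hau : a^2 = u^2 := sq_abs u
  have hwv : w^2 = v^2 := sq_abs v
  have hE0 : 0 < E := Real.exp_pos _
  have hF0 : 0 < F := Real.exp_pos _
  clear_value s E F D a w
  have hE1 : E ≤ 1 := by
    rw [hE]; apply Real.exp_le_one_iff.mpr; nlinarith [sq_nonneg u]
  have hEsq : Real.exp (-(c*u^2)/2) = E * E := by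
    rw [hE, ← Real.exp_add]; ring_nf
  have hab : a ≤ w := by nlinarith [hau, hwv, h, ha0, hw0]
  rcases le_or_gt 1 (s * D) with hbig | hsmall
  · have h1 : Real.exp (-(c*u^2)/2) - Real.exp (-(c*v^2)/2) ≤ E := by
      rw [hEsq]
      have hEE : E*E ≤ 1*E := mul_le_mul_of_nonneg_right hE1 hE0.le
      linarith only [hEE, (Real.exp_pos (-(c*v^2)/2)).le]
    have h2 : E ≤ s * D * E := by
      have := mul_le_mul_of_nonneg_right hbig hE0.le
      linarith only [this]
    linarith only [h1, h2, hE0.le, mul_nonneg (mul_nonneg hs0.le hD0) hF0.le]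
  · have hfac : Real.exp (-(c*v^2)/2) = Real.exp (-(c*u^2)/2) * Real.exp (-(c*(v^2-u^2))/2) := by
      rw [← Real.exp_add]; ring_nf
    have h1e : 1 - Real.exp (-(c*(v^2-u^2))/2) ≤ c*(v^2-u^2)/2 := by
      have := Real.add_one_le_exp (-(c*(v^2-u^2))/2)
      linarith
    have hdiff : Real.exp (-(c*u^2)/2) - Real.exp (-(c*v^2)/2) ≤ (E*E) * (c*(v^2-u^2)/2) := by
      rw [hfac, hEsq]
      have h2 : (E*E) * (1 - Real.exp (-(c*(v^2-u^2))/2)) ≤ (E*E) * (c*(v^2-u^2)/2) :=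
        mul_le_mul_of_nonneg_left h1e (by positivity)
      linarith [h2]
    have hsaE : s * a * E ≤ 1 := by
      have e1 : (s*a)*(s*a) = c*u^2 := by
        have : (s*a)*(s*a) = s^2 * a^2 := by ring
        rw [this, hcs, hau]
      have h3 : s * a ≤ Real.exp ((c*u^2)/4) := by
        apply quarter_sq_bound
        have h4 := Real.add_one_le_exp ((c*u^2)/4)
        have e2 : (s*a)^2 = c*u^2 := by rw [← e1]; ring
        rw [e2]; linarith
      have h5 : Real.exp ((c*u^2)/4) * E = 1 := by
        rw [hE, ← Real.exp_add]; ring_nf; exact Real.exp_zero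
      calc s * a * E ≤ Real.exp ((c*u^2)/4) * E := mul_le_mul_of_nonneg_right h3 hE0.le
        _ = 1 := h5
    have hdle : w - a ≤ D := by
      have h6 := abs_sub_abs_le_abs_sub v u
      rw [abs_sub_comm] at h6
      rw [hD, ha, hw]; exact h6
    have hvu : v^2 - u^2 ≤ D * (2*a + D) := by
      have h10 : w ≤ a + D := by linarith only [hdle]
      have h11 : w*w ≤ (a+D)*(a+D) := mul_self_le_mul_self hw0 h10
      nlinarith [h11, hau, hwv]
    have hcd : c * D ≤ s := by
      have h9 : s*(s*D) ≤ s*1 := mul_le_mul_of_nonneg_left hsmall.le hs0.le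
      calc c*D = s*(s*D) := by rw [← hcs]; ring
        _ ≤ s*1 := h9
        _ = s := mul_one _
    have t3 : c*a*(E*E) ≤ s * E :=
      calc c*a*(E*E) = s*E*(s*a*E) := by rw [← hcs]; ring
        _ ≤ s*E*1 := mul_le_mul_of_nonneg_left hsaE (by positivity)
        _ = s*E := mul_one _
    have t4 : c*D*(E*E)/2 ≤ s * E / 2 := by
      have h7 : c*D*(E*E) ≤ s*(E*E) := mul_le_mul_of_nonneg_right hcd (by positivity)
      have hEE : E*E ≤ 1*E := mul_le_mul_of_nonneg_right hE1 hE0.le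
      have h8 : s*(E*E) ≤ s*(1*E) := mul_le_mul_of_nonneg_left hEE hs0.le
      have h8' : s*(1*E) = s*E := by ring
      linarith only [h7, h8, h8']
    have hgoal : (E*E) * (c*(v^2-u^2)/2) ≤ 2 * s * D * E := by
      have t1 : (E*E) * (c*(v^2-u^2)/2) ≤ (E*E) * (c * (D * (2*a + D)) / 2) := by
        apply mul_le_mul_of_nonneg_left _ (by positivity)
        have hc2 : (0:ℝ) ≤ c / 2 := by positivity
        have h12 := mul_le_mul_of_nonneg_left hvu hc2
        linarith only [h12]
      have t2 : (E*E) * (c * (D * (2*a + D)) / 2) = D * (c*a*(E*E) + c*D*(E*E)/2) := by ring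
      have t5 : D * (c*a*(E*E) + c*D*(E*E)/2) ≤ D * (s*E + s*E/2) :=
        mul_le_mul_of_nonneg_left (by linarith) hD0
      have h13 : 0 ≤ D*(s*E) := mul_nonneg hD0 (mul_nonneg hs0.le hE0.le)
      linarith only [t1, t2, t5, h13]
    calc Real.exp (-(c*u^2)/2) - Real.exp (-(c*v^2)/2) ≤ (E*E) * (c*(v^2-u^2)/2) := hdiff
      _ ≤ 2 * s * D * E := hgoal
      _ ≤ 2 * s * D * (E + F) := by
          linarith only [mul_nonneg (mul_nonneg hs0.le hD0) hF0.le]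


open scoped RealInnerProductSpace

lemma oneD_abs (c u v : ℝ) (hc : 0 < c) :
    |Real.exp (-(c*u^2)/2) - Real.exp (-(c*v^2)/2)| ≤
      2 * Real.sqrt c * |u - v| * (Real.exp (-(c*u^2)/4) + Real.exp (-(c*v^2)/4)) := by
  rcases le_total (u^2) (v^2) with h | h
  · rw [abs_of_nonneg (sub_nonneg.mpr (Real.exp_le_exp.mpr (by nlinarith)))]
    exact oneD c u v hc h
  · rw [abs_sub_comm, abs_of_nonneg (sub_nonneg.mpr (Real.exp_le_exp.mpr (by nlinarith)))]
    have := oneD c v u hc h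
    rw [abs_sub_comm v u, add_comm (Real.exp (-(c*v^2)/4))] at this
    exact this

/-- Let `α ∈ ℝ^d` with `⟨α,α⟩ = 2` and `σ_α(y) = y - ⟨y,α⟩α`. For every `b > 0` there is
`C > 0` such that for all `t > 0` and all `y, η ∈ ℝ^d` with `⟨y,α⟩ ≠ 0`,
`|e^{-(b/t)|y-η|²} - e^{-(b/t)|σ_α(y)-η|²}|/|⟨y,α⟩| ≤
  C t^{-1/2} (e^{-(b/(2t))|y-η|²} + e^{-(b/(2t))|σ_α(y)-η|²})`. -/
theorem reflection_difference_bound {d : ℕ} (α : EuclideanSpace ℝ (Fin d))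
    (hα : ⟪α, α⟫ = (2 : ℝ)) (b : ℝ) (hb : 0 < b) :
    ∃ C > (0 : ℝ), ∀ t : ℝ, 0 < t → ∀ y η : EuclideanSpace ℝ (Fin d), ⟪y, α⟫ ≠ (0 : ℝ) →
      |Real.exp (-(b / t) * ‖y - η‖ ^ 2) -
          Real.exp (-(b / t) * ‖(y - ⟪y, α⟫ • α) - η‖ ^ 2)| / |⟪y, α⟫| ≤
        C * t ^ (-(1 : ℝ) / 2) *
          (Real.exp (-(b / (2 * t)) * ‖y - η‖ ^ 2) +
            Real.exp (-(b / (2 * t)) * ‖(y - ⟪y, α⟫ • α) - η‖ ^ 2)) := by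
  refine ⟨4 * Real.sqrt b, by positivity, ?_⟩
  intro t ht y η hsne
  set s : ℝ := ⟪y, α⟫ with hsdef
  set A := ‖y - η‖ ^ 2 with hA
  set B := ‖(y - s • α) - η‖ ^ 2 with hBdef
  set u : ℝ := ⟪y - η, α⟫ with hudef
  set c := b / t with hc
  have hc0 : 0 < c := div_pos hb ht
  have hα2 : ‖α‖ ^ 2 = 2 := by
    rw [← real_inner_self_eq_norm_sq]; exact hα
  have hsα : ‖s • α‖ ^ 2 = s^2 * 2 := by
    rw [norm_smul, mul_pow, Real.norm_eq_abs, sq_abs, hα2]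
  have hB : B = A - 2*s*u + 2*s^2 := by
    rw [hBdef, show y - s • α - η = (y - η) - s • α by abel, norm_sub_sq_real,
      real_inner_smul_right, ← hudef, ← hA, hsα]
    ring
  have hu2A : u^2 ≤ 2*A := by
    have h1 := abs_real_inner_le_norm (y - η) α
    rw [← hudef] at h1
    have h2 : ‖α‖ = Real.sqrt 2 := by
      rw [← Real.sqrt_sq (norm_nonneg α), hα2]
    nlinarith [sq_abs u, norm_nonneg (y - η), Real.sq_sqrt (by norm_num : (0:ℝ) ≤ 2),
      Real.sqrt_nonneg 2, mul_self_le_mul_self (abs_nonneg u) h1]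
  set W := A - u^2/2 with hWdef
  have hW0 : 0 ≤ W := by rw [hWdef]; linarith
  set v := u - 2*s with hv
  rw [div_le_iff₀ (abs_pos.mpr hsne)]
  have eA : -c * A = -(c*W) + -(c*u^2)/2 := by rw [hWdef]; ring
  have eB : -c * B = -(c*W) + -(c*v^2)/2 := by rw [hB, hWdef, hv]; ring
  have eA2 : -(b/(2*t)) * A = -(c*W)/2 + -(c*u^2)/4 := by
    rw [hWdef, hc]; field_simp; ring
  have eB2 : -(b/(2*t)) * B = -(c*W)/2 + -(c*v^2)/4 := by
    rw [hB, hWdef, hv, hc]; field_simp; ring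
  rw [eA, eB, eA2, eB2, Real.exp_add, Real.exp_add, Real.exp_add, Real.exp_add,
    ← mul_sub, abs_mul, abs_of_pos (Real.exp_pos _)]
  have key := oneD_abs c u v hc0
  have huv : |u - v| = 2 * |s| := by
    rw [show u - v = 2*s by rw [hv]; ring, abs_mul, abs_two]
  have hT : Real.sqrt c = Real.sqrt b * t ^ (-(1:ℝ)/2) := by
    rw [hc, show (-(1:ℝ)/2) = -(1/2 : ℝ) by norm_num, Real.rpow_neg ht.le,
      ← Real.sqrt_eq_rpow, Real.sqrt_div hb.le, div_eq_mul_inv]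
  have hexpW : Real.exp (-(c*W)) ≤ Real.exp (-(c*W)/2) := by
    apply Real.exp_le_exp.mpr
    nlinarith [mul_nonneg hc0.le hW0]
  calc Real.exp (-(c*W)) * |Real.exp (-(c*u^2)/2) - Real.exp (-(c*v^2)/2)|
      ≤ Real.exp (-(c*W)) * (2 * Real.sqrt c * |u - v| *
          (Real.exp (-(c*u^2)/4) + Real.exp (-(c*v^2)/4))) :=
        mul_le_mul_of_nonneg_left key (Real.exp_pos _).le
    _ ≤ Real.exp (-(c*W)/2) * (2 * Real.sqrt c * (2 * |s|) *
          (Real.exp (-(c*u^2)/4) + Real.exp (-(c*v^2)/4))) := by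
        rw [huv]
        exact mul_le_mul_of_nonneg_right hexpW (by positivity)
    _ = 4 * Real.sqrt b * t ^ (-(1:ℝ)/2) *
          (Real.exp (-(c*W)/2) * Real.exp (-(c*u^2)/4) +
            Real.exp (-(c*W)/2) * Real.exp (-(c*v^2)/4)) * |s| := by
        rw [hT]; ring
end
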